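/- Let S and S' be staircase complexes with lists (a_1,…,a_n) and (b_1,…,b_m). Then the tensor product S ⊗ S' over 𝔽₂ decomposes as a direct sum of chain complexes: S ⊗ S' ≅ S# ⊕ ⊕_{i=1}^{n} ⊕_{j=1}^{m} A_{i,j}, where S# is a staircase complex with 2(n+m)+1 generators and each A_{i,j} is an acyclic 4-dimensional complex. -/

import Mathlib

open Submodule Set Fin.NatCast

private lemma addself {V : Type*} [AddCommGroup V] [Module (ZMod 2) V] (v : V) : v + v = 0 := by
  have h : ((2 : ZMod 2)) • v = 0 := by
    rw [show ((2:ZMod 2)) = 0 by decide, zero_smul]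
  rwa [two_smul] at h

private def EE (n m : ℕ) (a b : ℕ) : Fin (2*n+1) × Fin (2*m+1) → ZMod 2 :=
  Pi.single ((a : Fin (2*n+1)), (b : Fin (2*m+1))) 1

private lemma EE_congr (n m : ℕ) {a a' b b' : ℕ} (ha : a = a') (hb : b = b') :
    EE n m a b = EE n m a' b' := by rw [ha, hb]

private theorem aux_indep {K V : Type*} [DivisionRing K] [AddCommGroup V] [Module K V]
    {ι : Type*} {κ : ι → Type*} {w : (Σ i, κ i) → V}
    (hw : LinearIndependent K w) :
    iSupIndep (fun i => Submodule.span K (Set.range fun k : κ i => w ⟨i, k⟩)) := by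
  rw [iSupIndep_def]
  intro i
  have hre : ∀ j : ι, (Set.range fun k : κ j => w ⟨j, k⟩) = w '' (Sigma.fst ⁻¹' {j}) := by
    intro j; ext x; constructor
    · rintro ⟨k, rfl⟩; exact ⟨⟨j, k⟩, rfl, rfl⟩
    · rintro ⟨⟨j', k⟩, hj, rfl⟩
      cases (Set.mem_preimage.mp hj : j' = j)
      exact ⟨k, rfl⟩
  refine Disjoint.mono ?_ ?_
    (hw.disjoint_span_image (s := Sigma.fst ⁻¹' {i}) (t := Sigma.fst ⁻¹' {i}ᶜ) ?_)
  · rw [hre]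
  · refine iSup₂_le fun j hj => ?_
    rw [hre]
    exact Submodule.span_mono (Set.image_mono (fun x hx => by
      simp only [Set.mem_preimage, Set.mem_singleton_iff] at hx ⊢
      simp [hx, hj]))
  · exact Disjoint.preimage _ (disjoint_compl_right (a := ({i} : Set ι)))

private theorem hDE (n m : ℕ)
    (D : (Fin (2 * n + 1) × Fin (2 * m + 1) → ZMod 2) →ₗ[ZMod 2]
         (Fin (2 * n + 1) × Fin (2 * m + 1) → ZMod 2))
    (hD : ∀ (p : Fin (2 * n + 1)) (q : Fin (2 * m + 1)),
      D (Pi.single (p, q) 1) =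
        (if (p : ℕ) % 2 = 1 then Pi.single (p - 1, q) 1 + Pi.single (p + 1, q) 1 else 0) +
        (if (q : ℕ) % 2 = 1 then Pi.single (p, q - 1) 1 + Pi.single (p, q + 1) 1 else 0))
    {a b : ℕ} (ha : a < 2*n+1) (hb : b < 2*m+1) :
    D (EE n m a b) =
      (if a % 2 = 1 then EE n m (a-1) b + EE n m (a+1) b else 0) +
      (if b % 2 = 1 then EE n m a (b-1) + EE n m a (b+1) else 0) := by
  have hp : ((a : Fin (2*n+1)) : ℕ) = a := Fin.val_cast_of_lt ha
  have hq : ((b : Fin (2*m+1)) : ℕ) = b := Fin.val_cast_of_lt hb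
  have key := hD (a : Fin (2*n+1)) (b : Fin (2*m+1))
  rw [hp, hq] at key
  show D (Pi.single ((a : Fin (2*n+1)), (b : Fin (2*m+1))) 1) = _
  rw [key]
  congr 1
  · split_ifs with h
    · have h1 : (a : Fin (2*n+1)) - 1 = ((a-1 : ℕ) : Fin (2*n+1)) := by
        conv_lhs => rw [show a = (a-1)+1 by omega]
        rw [Nat.cast_add, Nat.cast_one, add_sub_cancel_right]
      have h2 : (a : Fin (2*n+1)) + 1 = ((a+1 : ℕ) : Fin (2*n+1)) := by
        rw [Nat.cast_add, Nat.cast_one]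
      rw [h1, h2]; rfl
    · rfl
  · split_ifs with h
    · have h1 : (b : Fin (2*m+1)) - 1 = ((b-1 : ℕ) : Fin (2*m+1)) := by
        conv_lhs => rw [show b = (b-1)+1 by omega]
        rw [Nat.cast_add, Nat.cast_one, add_sub_cancel_right]
      have h2 : (b : Fin (2*m+1)) + 1 = ((b+1 : ℕ) : Fin (2*m+1)) := by
        rw [Nat.cast_add, Nat.cast_one]
      rw [h1, h2]; rfl
    · rfl

private def kap (n m : ℕ) : Option (Fin n × Fin m) → Type
  | none => Fin (2*(n+m)+1)
  | some _ => Fin 4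

private instance kapFT (n m : ℕ) (o : Option (Fin n × Fin m)) : Fintype (kap n m o) :=
  match o with
  | none => inferInstanceAs (Fintype (Fin _))
  | some _ => inferInstanceAs (Fintype (Fin 4))

private def stair (n m : ℕ) (k : Fin (2*(n+m)+1)) : Fin (2*n+1) × Fin (2*m+1) → ZMod 2 :=
  if (k:ℕ) ≤ 2*n then EE n m k 0 else EE n m (2*n) (k - 2*n)

private def quad (n m : ℕ) (i : Fin n) (j : Fin m) :
    Fin 4 → (Fin (2*n+1) × Fin (2*m+1) → ZMod 2) :=
  ![EE n m (2*i+1) (2*j+1),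
    EE n m (2*i) (2*j+1) + EE n m (2*i+1) (2*j),
    EE n m (2*i+2) (2*j+1) + EE n m (2*i+1) (2*j+2),
    EE n m (2*i) (2*j+2) + EE n m (2*i+2) (2*j)]

private def wfam (n m : ℕ) : (o : Option (Fin n × Fin m)) → kap n m o →
    (Fin (2*n+1) × Fin (2*m+1) → ZMod 2)
  | none => stair n m
  | some ij => quad n m ij.1 ij.2

private theorem mem_T (n m : ℕ) (hn : 1 ≤ n) (hm : 1 ≤ m) :
    ∀ b, b < 2*m+1 → ∀ a, a < 2*n+1 →
      EE n m a b ∈ Submodule.span (ZMod 2)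
        (Set.range (fun x : Σ o, kap n m o => wfam n m x.1 x.2)) := by
  intro b
  induction b using Nat.strong_induction_on with
  | _ b IH =>
    intro hb a ha
    set T := Submodule.span (ZMod 2)
        (Set.range (fun x : Σ o, kap n m o => wfam n m x.1 x.2)) with hT
    have hst : ∀ k : Fin (2*(n+m)+1), stair n m k ∈ T := fun k =>
      Submodule.subset_span ⟨⟨none, k⟩, rfl⟩
    have hqd : ∀ (i : Fin n) (j : Fin m) (t : Fin 4), quad n m i j t ∈ T := fun i j t =>
      Submodule.subset_span ⟨⟨some (i, j), t⟩, rfl⟩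
    rcases Nat.eq_zero_or_pos b with rfl | hbpos
    · have h := hst ⟨a, by omega⟩
      rwa [stair, if_pos (by simp; omega)] at h
    rcases eq_or_ne a (2*n) with rfl | hane
    · have h := hst ⟨2*n + b, by omega⟩
      rwa [stair, if_neg (by simp; omega),
        show (⟨2*n+b, by omega⟩ : Fin (2*(n+m)+1)).val - 2*n = b by simp] at h
    have ha' : a < 2*n := by omega
    rcases Nat.even_or_odd a with ⟨i, hi⟩ | ⟨i, hi⟩ <;>
      rcases Nat.even_or_odd b with ⟨j, hj⟩ | ⟨j, hj⟩
    · -- a = 2i even, b = 2j even (b ≥ 2)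
      have hj1 : 1 ≤ j := by omega
      have hjm : j - 1 < m := by omega
      have hin : i < n := by omega
      have h3 := hqd ⟨i, hin⟩ ⟨j-1, hjm⟩ 3
      rw [quad] at h3
      simp only [Matrix.cons_val_three, Matrix.tail_cons, Matrix.head_cons] at h3
      have heq : EE n m a b = (EE n m (2*i) (2*(j-1)+2) + EE n m (2*i+2) (2*(j-1))) -
          EE n m (2*i+2) (2*(j-1)) := by
        rw [show 2*(j-1)+2 = b by omega, show 2*i = a by omega]; abel
      rw [heq]
      exact Submodule.sub_mem _ h3 (IH (2*(j-1)) (by omega) (by omega) _ (by omega))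
    · -- a = 2i even, b = 2j+1 odd
      have hjm : j < m := by omega
      have hin : i < n := by omega
      have h1 := hqd ⟨i, hin⟩ ⟨j, hjm⟩ 1
      rw [quad] at h1
      simp only [Matrix.cons_val_one, Matrix.head_cons] at h1
      have heq : EE n m a b = (EE n m (2*i) (2*j+1) + EE n m (2*i+1) (2*j)) -
          EE n m (2*i+1) (2*j) := by
        rw [show 2*j+1 = b by omega, show 2*i = a by omega]; abel
      rw [heq]
      exact Submodule.sub_mem _ h1 (IH (2*j) (by omega) (by omega) _ (by omega))
    · -- a = 2i+1 odd, b = 2j even (b ≥ 2)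
      have hj1 : 1 ≤ j := by omega
      have hjm : j - 1 < m := by omega
      have hin : i < n := by omega
      have h2 := hqd ⟨i, hin⟩ ⟨j-1, hjm⟩ 2
      rw [quad] at h2
      simp only [Matrix.cons_val_two, Matrix.tail_cons, Matrix.head_cons] at h2
      have heq : EE n m a b = (EE n m (2*i+2) (2*(j-1)+1) + EE n m (2*i+1) (2*(j-1)+2)) -
          EE n m (2*i+2) (2*(j-1)+1) := by
        rw [show 2*(j-1)+2 = b by omega, show 2*i+1 = a by omega]; abel
      rw [heq]
      exact Submodule.sub_mem _ h2 (IH (2*(j-1)+1) (by omega) (by omega) _ (by omega))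
    · -- a = 2i+1 odd, b = 2j+1 odd
      have hjm : j < m := by omega
      have hin : i < n := by omega
      have h0 := hqd ⟨i, hin⟩ ⟨j, hjm⟩ 0
      rw [quad] at h0
      simp only [Matrix.cons_val_zero] at h0
      rwa [show a = 2*i+1 by omega, show b = 2*j+1 by omega]

/-- The tensor product of two staircase complexes over `𝔽₂` (with `n` resp. `m` steps)
decomposes as a direct sum of chain complexes `S# ⊕ ⊕_{i,j} A_{i,j}`, where `S#` is a
staircase complex with `2(n+m)+1` generators and each `A_{i,j}` is a `D`-invariant acyclic
4-dimensional complex. -/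
theorem stmt12 (n m : ℕ) (hn : 1 ≤ n) (hm : 1 ≤ m)
    (D : (Fin (2 * n + 1) × Fin (2 * m + 1) → ZMod 2) →ₗ[ZMod 2]
         (Fin (2 * n + 1) × Fin (2 * m + 1) → ZMod 2))
    (hD : ∀ (p : Fin (2 * n + 1)) (q : Fin (2 * m + 1)),
      D (Pi.single (p, q) 1) =
        (if (p : ℕ) % 2 = 1 then Pi.single (p - 1, q) 1 + Pi.single (p + 1, q) 1 else 0) +
        (if (q : ℕ) % 2 = 1 then Pi.single (p, q - 1) 1 + Pi.single (p, q + 1) 1 else 0)) :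
    ∃ (Ssub : Submodule (ZMod 2) (Fin (2 * n + 1) × Fin (2 * m + 1) → ZMod 2))
      (A : Fin n → Fin m → Submodule (ZMod 2) (Fin (2 * n + 1) × Fin (2 * m + 1) → ZMod 2)),
      -- direct sum decomposition of the underlying module
      iSupIndep
        (fun o : Option (Fin n × Fin m) => o.elim Ssub (fun ij => A ij.1 ij.2)) ∧
      (⨆ o : Option (Fin n × Fin m), o.elim Ssub (fun ij => A ij.1 ij.2)) = ⊤ ∧
      -- `Ssub` is a staircase complex with `2(n+m)+1` generators
      (∃ b : Fin (2 * (n + m) + 1) → (Fin (2 * n + 1) × Fin (2 * m + 1) → ZMod 2),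
        LinearIndependent (ZMod 2) b ∧
        Submodule.span (ZMod 2) (Set.range b) = Ssub ∧
        (∀ k (h : 2 * k + 1 < 2 * (n + m) + 1),
          D (b ⟨2 * k + 1, h⟩) = b ⟨2 * k, by omega⟩ + b ⟨2 * k + 2, by omega⟩) ∧
        (∀ k (h : 2 * k < 2 * (n + m) + 1), D (b ⟨2 * k, h⟩) = 0)) ∧
      -- each `A i j` is a `D`-invariant acyclic 4-dimensional subcomplex
      (∀ i j, (∀ v ∈ A i j, D v ∈ A i j) ∧
        Module.finrank (ZMod 2) (A i j) = 4 ∧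
        (∀ v ∈ A i j, D v = 0 → ∃ w ∈ A i j, D w = v)) := by
  classical
  let w : (Σ o : Option (Fin n × Fin m), kap n m o) → (Fin (2*n+1) × Fin (2*m+1) → ZMod 2) :=
    fun x => wfam n m x.1 x.2
  have hspan : ⊤ ≤ Submodule.span (ZMod 2) (Set.range w) := by
    rw [← (Pi.basisFun (ZMod 2) (Fin (2*n+1) × Fin (2*m+1))).span_eq]
    refine Submodule.span_le.mpr ?_
    rintro _ ⟨pq, rfl⟩
    have h := mem_T n m hn hm pq.2.val pq.2.isLt pq.1.val pq.1.isLt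
    rw [EE, Fin.cast_val_eq_self, Fin.cast_val_eq_self] at h
    rw [Pi.basisFun_apply]
    exact h
  have hcard : Fintype.card (Σ o : Option (Fin n × Fin m), kap n m o) =
      Module.finrank (ZMod 2) (Fin (2*n+1) × Fin (2*m+1) → ZMod 2) := by
    rw [Module.finrank_fintype_fun_eq_card, Fintype.card_sigma, Fintype.card_prod,
        Fintype.card_fin, Fintype.card_fin, univ_option, Finset.sum_insertNone]
    have h1 : Fintype.card (kap n m none) = 2*(n+m)+1 := Fintype.card_fin _
    have h2 : ∀ x : Fin n × Fin m, Fintype.card (kap n m (some x)) = 4 := fun x =>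
      Fintype.card_fin _
    rw [h1, Finset.sum_congr rfl (fun x _ => h2 x), Finset.sum_const, Finset.card_univ,
      Fintype.card_prod, Fintype.card_fin, Fintype.card_fin, smul_eq_mul]
    ring
  have hw : LinearIndependent (ZMod 2) w :=
    linearIndependent_of_top_le_span_of_card_eq_finrank hspan hcard
  refine ⟨Submodule.span (ZMod 2) (Set.range (stair n m)),
    fun i j => Submodule.span (ZMod 2) (Set.range (quad n m i j)), ?_, ?_, ?_, ?_⟩
  · -- iSupIndep
    have he : (fun o : Option (Fin n × Fin m) =>
        o.elim (Submodule.span (ZMod 2) (Set.range (stair n m)))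
          (fun ij => Submodule.span (ZMod 2) (Set.range (quad n m ij.1 ij.2))))
        = fun o => Submodule.span (ZMod 2) (Set.range fun k : kap n m o => w ⟨o, k⟩) := by
      funext o; cases o with
      | none => rfl
      | some ij => rfl
    rw [he]
    exact aux_indep hw
  · -- iSup = ⊤
    have he : ∀ o : Option (Fin n × Fin m),
        o.elim (Submodule.span (ZMod 2) (Set.range (stair n m)))
          (fun ij => Submodule.span (ZMod 2) (Set.range (quad n m ij.1 ij.2)))
        = Submodule.span (ZMod 2) (Set.range fun k : kap n m o => w ⟨o, k⟩) := by
      intro o; cases o <;> rfl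
    rw [iSup_congr he, ← Submodule.span_iUnion, ← Set.range_sigma_eq_iUnion_range]
    exact eq_top_iff.mpr hspan
  · -- staircase part
    refine ⟨stair n m, hw.comp (fun k => ⟨none, k⟩) sigma_mk_injective, rfl, ?_, ?_⟩
    · intro t h
      by_cases hc : 2*t+1 ≤ 2*n
      · have e1 : stair n m ⟨2*t+1, h⟩ = EE n m (2*t+1) 0 := if_pos hc
        have e2 : stair n m ⟨2*t, by omega⟩ = EE n m (2*t) 0 := if_pos (by omega : 2*t ≤ 2*n)
        have e3 : stair n m ⟨2*t+2, by omega⟩ = EE n m (2*t+2) 0 :=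
          if_pos (by omega : 2*t+2 ≤ 2*n)
        rw [e1, e2, e3, hDE n m D hD (by omega) (by omega),
          if_pos (by omega : (2*t+1) % 2 = 1), if_neg (by omega : ¬ (0 % 2 = 1)), add_zero]
        exact congrArg₂ (· + ·) (EE_congr n m (by omega) rfl) (EE_congr n m (by omega) rfl)
      · have e1 : stair n m ⟨2*t+1, h⟩ = EE n m (2*n) (2*t+1-2*n) := if_neg hc
        rw [e1, hDE n m D hD (by omega) (by omega : 2*t+1-2*n < 2*m+1),
          if_neg (by omega : ¬ ((2*n) % 2 = 1)), if_pos (by omega : (2*t+1-2*n) % 2 = 1),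
          zero_add]
        by_cases hc2 : 2*t ≤ 2*n
        · have e2 : stair n m ⟨2*t, by omega⟩ = EE n m (2*t) 0 := if_pos hc2
          have e3 : stair n m ⟨2*t+2, by omega⟩ = EE n m (2*n) (2*t+2-2*n) :=
            if_neg (by omega : ¬ (2*t+2 ≤ 2*n))
          rw [e2, e3]
          exact congrArg₂ (· + ·) (EE_congr n m (by omega) (by omega))
            (EE_congr n m rfl (by omega))
        · have e2 : stair n m ⟨2*t, by omega⟩ = EE n m (2*n) (2*t-2*n) := if_neg hc2
          have e3 : stair n m ⟨2*t+2, by omega⟩ = EE n m (2*n) (2*t+2-2*n) :=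
            if_neg (by omega : ¬ (2*t+2 ≤ 2*n))
          rw [e2, e3]
          exact congrArg₂ (· + ·) (EE_congr n m rfl (by omega))
            (EE_congr n m rfl (by omega))
    · intro t h
      by_cases hc : 2*t ≤ 2*n
      · have e1 : stair n m ⟨2*t, h⟩ = EE n m (2*t) 0 := if_pos hc
        rw [e1, hDE n m D hD (by omega) (by omega),
          if_neg (by omega : ¬ ((2*t) % 2 = 1)), if_neg (by omega : ¬ (0 % 2 = 1)), add_zero]
      · have e1 : stair n m ⟨2*t, h⟩ = EE n m (2*n) (2*t-2*n) := if_neg hc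
        rw [e1, hDE n m D hD (by omega) (by omega : 2*t-2*n < 2*m+1),
          if_neg (by omega : ¬ ((2*n) % 2 = 1)), if_neg (by omega : ¬ ((2*t-2*n) % 2 = 1)),
          add_zero]
  · -- the quads
    intro i j
    have hg : LinearIndependent (ZMod 2) (quad n m i j) :=
      hw.comp (fun t => ⟨some (i, j), t⟩) sigma_mk_injective
    have hin : (i:ℕ) < n := i.isLt
    have hjm : (j:ℕ) < m := j.isLt
    have hq0 : quad n m i j 0 = EE n m (2*(i:ℕ)+1) (2*(j:ℕ)+1) := rfl
    have hq1 : quad n m i j 1 = EE n m (2*(i:ℕ)) (2*(j:ℕ)+1) + EE n m (2*(i:ℕ)+1) (2*(j:ℕ)) :=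
      rfl
    have hq2 : quad n m i j 2 =
        EE n m (2*(i:ℕ)+2) (2*(j:ℕ)+1) + EE n m (2*(i:ℕ)+1) (2*(j:ℕ)+2) := rfl
    have hq3 : quad n m i j 3 =
        EE n m (2*(i:ℕ)) (2*(j:ℕ)+2) + EE n m (2*(i:ℕ)+2) (2*(j:ℕ)) := rfl
    have hD0 : D (quad n m i j 0) = quad n m i j 1 + quad n m i j 2 := by
      have key : D (EE n m (2*(i:ℕ)+1) (2*(j:ℕ)+1)) =
          (EE n m (2*(i:ℕ)) (2*(j:ℕ)+1) + EE n m (2*(i:ℕ)+2) (2*(j:ℕ)+1)) +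
          (EE n m (2*(i:ℕ)+1) (2*(j:ℕ)) + EE n m (2*(i:ℕ)+1) (2*(j:ℕ)+2)) := by
        rw [hDE n m D hD (by omega) (by omega), if_pos (by omega), if_pos (by omega)]
        rfl
      rw [hq0, key, hq1, hq2]
      abel
    have hD1 : D (quad n m i j 1) = quad n m i j 3 := by
      have t1 : D (EE n m (2*(i:ℕ)) (2*(j:ℕ)+1)) =
          EE n m (2*(i:ℕ)) (2*(j:ℕ)) + EE n m (2*(i:ℕ)) (2*(j:ℕ)+2) := by
        rw [hDE n m D hD (by omega) (by omega), if_neg (by omega), if_pos (by omega), zero_add]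
        rfl
      have t2 : D (EE n m (2*(i:ℕ)+1) (2*(j:ℕ))) =
          EE n m (2*(i:ℕ)) (2*(j:ℕ)) + EE n m (2*(i:ℕ)+2) (2*(j:ℕ)) := by
        rw [hDE n m D hD (by omega) (by omega), if_pos (by omega), if_neg (by omega), add_zero]
        rfl
      rw [hq1, map_add, t1, t2, hq3]
      have hcan : (EE n m (2*(i:ℕ)) (2*(j:ℕ)) + EE n m (2*(i:ℕ)) (2*(j:ℕ)+2)) +
          (EE n m (2*(i:ℕ)) (2*(j:ℕ)) + EE n m (2*(i:ℕ)+2) (2*(j:ℕ))) =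
          (EE n m (2*(i:ℕ)) (2*(j:ℕ)) + EE n m (2*(i:ℕ)) (2*(j:ℕ))) +
          (EE n m (2*(i:ℕ)) (2*(j:ℕ)+2) + EE n m (2*(i:ℕ)+2) (2*(j:ℕ))) := by abel
      rw [hcan, addself, zero_add]
    have hD2 : D (quad n m i j 2) = quad n m i j 3 := by
      have t1 : D (EE n m (2*(i:ℕ)+2) (2*(j:ℕ)+1)) =
          EE n m (2*(i:ℕ)+2) (2*(j:ℕ)) + EE n m (2*(i:ℕ)+2) (2*(j:ℕ)+2) := by
        rw [hDE n m D hD (by omega) (by omega), if_neg (by omega), if_pos (by omega), zero_add]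
        rfl
      have t2 : D (EE n m (2*(i:ℕ)+1) (2*(j:ℕ)+2)) =
          EE n m (2*(i:ℕ)) (2*(j:ℕ)+2) + EE n m (2*(i:ℕ)+2) (2*(j:ℕ)+2) := by
        rw [hDE n m D hD (by omega) (by omega), if_pos (by omega), if_neg (by omega), add_zero]
        rfl
      rw [hq2, map_add, t1, t2, hq3]
      have hcan : (EE n m (2*(i:ℕ)+2) (2*(j:ℕ)) + EE n m (2*(i:ℕ)+2) (2*(j:ℕ)+2)) +
          (EE n m (2*(i:ℕ)) (2*(j:ℕ)+2) + EE n m (2*(i:ℕ)+2) (2*(j:ℕ)+2)) =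
          (EE n m (2*(i:ℕ)+2) (2*(j:ℕ)+2) + EE n m (2*(i:ℕ)+2) (2*(j:ℕ)+2)) +
          (EE n m (2*(i:ℕ)) (2*(j:ℕ)+2) + EE n m (2*(i:ℕ)+2) (2*(j:ℕ))) := by abel
      rw [hcan, addself, zero_add]
    have hD3 : D (quad n m i j 3) = 0 := by
      have t1 : D (EE n m (2*(i:ℕ)) (2*(j:ℕ)+2)) = 0 := by
        rw [hDE n m D hD (by omega) (by omega), if_neg (by omega), if_neg (by omega), add_zero]
      have t2 : D (EE n m (2*(i:ℕ)+2) (2*(j:ℕ))) = 0 := by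
        rw [hDE n m D hD (by omega) (by omega), if_neg (by omega), if_neg (by omega), add_zero]
      rw [hq3, map_add, t1, t2, add_zero]
    refine ⟨?_, ?_, ?_⟩
    · intro v hv
      refine Submodule.span_induction ?_ ?_ ?_ ?_ hv
      · rintro x ⟨t, rfl⟩
        match t with
        | 0 => rw [hD0]; exact add_mem (subset_span ⟨1, rfl⟩) (subset_span ⟨2, rfl⟩)
        | 1 => rw [hD1]; exact subset_span ⟨3, rfl⟩
        | 2 => rw [hD2]; exact subset_span ⟨3, rfl⟩
        | 3 => rw [hD3]; exact zero_mem _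
      · rw [map_zero]; exact zero_mem _
      · intro x y _ _ hx hy; rw [map_add]; exact add_mem hx hy
      · intro c x _ hx; rw [map_smul]; exact smul_mem _ _ hx
    · exact (finrank_span_eq_card hg).trans rfl
    · intro v hv hDv
      obtain ⟨c, hc⟩ := (mem_span_range_iff_exists_fun (ZMod 2)).mp hv
      have hDv' : D (∑ t, c t • quad n m i j t) = 0 := by rw [hc]; exact hDv
      rw [map_sum] at hDv'
      simp only [map_smul] at hDv'
      rw [Fin.sum_univ_four, hD0, hD1, hD2, hD3] at hDv'
      have hsum : (0:ZMod 2) • quad n m i j 0 + c 0 • quad n m i j 1 + c 0 • quad n m i j 2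
          + (c 1 + c 2) • quad n m i j 3 = 0 := by
        rw [zero_smul, zero_add, add_smul]
        rw [smul_add, smul_zero, add_zero] at hDv'
        rw [← hDv']
        abel
      have key := Fintype.linearIndependent_iff.mp hg ![0, c 0, c 0, c 1 + c 2]
        (by rw [Fin.sum_univ_four]; exact hsum)
      have hc0 : c 0 = 0 := key 1
      have hc12 : c 1 + c 2 = 0 := key 3
      have hc2 : c 2 = c 1 := by
        have hz : ∀ x y : ZMod 2, x + y = 0 → y = x := by decide
        exact hz _ _ hc12
      refine ⟨c 1 • quad n m i j 0 + c 3 • quad n m i j 1,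
        add_mem (smul_mem _ _ (subset_span ⟨0, rfl⟩)) (smul_mem _ _ (subset_span ⟨1, rfl⟩)),
        ?_⟩
      rw [map_add, map_smul, map_smul, hD0, hD1, ← hc, Fin.sum_univ_four, hc0, hc2,
        zero_smul, zero_add, smul_add]
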